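/- Let G = {(g_i, 𝔤_i) : 1 ≤ i ≤ l} be nonzero pseudo-polynomials over a Dedekind domain R. A nonzero pseudo-polynomial (f, 𝔣) is minimal with respect to G (i.e., cannot be reduced modulo G) if and only if its leading term module 𝔣[x]·LT(f) is not contained in the leading term ideal Lt(G) = Σ_i 𝔤_i[x]·LT(g_i). -/

import Mathlib

open MvPolynomial

attribute [local instance] MvPolynomial.algebraMvPolynomial

noncomputable def mdeg {σ : Type*} (m : MonomialOrder σ) {K : Type*} [CommSemiring K]
    (f : MvPolynomial σ K) : σ →₀ ℕ :=
  m.toSyn.symm (f.support.sup fun d => m.toSyn d)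

noncomputable def plc {σ : Type*} (m : MonomialOrder σ) {K : Type*} [CommSemiring K]
    (f : MvPolynomial σ K) : K :=
  f.coeff (mdeg m f)

open Classical in
/-- `(f, 𝔣)` can be reduced modulo the family `(gᵢ, 𝔤ᵢ)`:
`𝔣·LC(f) ⊆ ∑_{i ∈ J} 𝔤ᵢ·LC(gᵢ)` where `J = {i : LM(gᵢ) ∣ LM(f)}`. -/
noncomputable def Reducible {R : Type*} [CommRing R] [IsDomain R] [IsDedekindDomain R]
    {n l : ℕ} (m : MonomialOrder (Fin n))
    (g : Fin l → MvPolynomial (Fin n) (FractionRing R))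
    (𝔤 : Fin l → FractionalIdeal (nonZeroDivisors R) (FractionRing R))
    (𝔣 : FractionalIdeal (nonZeroDivisors R) (FractionRing R))
    (f : MvPolynomial (Fin n) (FractionRing R)) : Prop :=
  𝔣 * FractionalIdeal.spanSingleton (nonZeroDivisors R) (plc m f) ≤
    ∑ i ∈ Finset.univ.filter (fun i => ∃ γ, mdeg m f = mdeg m (g i) + γ),
      𝔤 i * FractionalIdeal.spanSingleton (nonZeroDivisors R) (plc m (g i))

section Aux

variable {R P : Type*} [CommRing R] [CommRing P] [Algebra R P] {S : Submonoid R}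

lemma FI_zero_mem (I : FractionalIdeal S P) : (0 : P) ∈ I :=
  FractionalIdeal.mem_coe.mp (Submodule.zero_mem _)

lemma FI_add_mem {I : FractionalIdeal S P} {a b : P} (ha : a ∈ I) (hb : b ∈ I) :
    a + b ∈ I :=
  FractionalIdeal.mem_coe.mp (Submodule.add_mem _ (FractionalIdeal.mem_coe.mpr ha)
    (FractionalIdeal.mem_coe.mpr hb))

lemma FI_smul_mem {I : FractionalIdeal S P} {a : P} (r : R) (ha : a ∈ I) :
    algebraMap R P r * a ∈ I := by
  rw [← Algebra.smul_def]
  exact FractionalIdeal.mem_coe.mp (Submodule.smul_mem _ r (FractionalIdeal.mem_coe.mpr ha))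

lemma FI_fsum_mem {ι : Type*} (s : Finset ι) (q : ι → P) (I : FractionalIdeal S P)
    (h : ∀ i ∈ s, q i ∈ I) : (∑ i ∈ s, q i) ∈ I := by
  rw [← FractionalIdeal.mem_coe]
  exact Submodule.sum_mem _ (fun i hi => FractionalIdeal.mem_coe.mpr (h i hi))

lemma FI_sum_induction {ι : Type*} (s : Finset ι) (T : ι → FractionalIdeal S P)
    {Q : P → Prop} (h0 : Q 0) (hadd : ∀ a b, Q a → Q b → Q (a + b))
    (hmem : ∀ i ∈ s, ∀ c ∈ T i, Q c) : ∀ c ∈ ∑ i ∈ s, T i, Q c := by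
  classical
  induction s using Finset.induction_on with
  | empty =>
    intro c hc
    rw [Finset.sum_empty, FractionalIdeal.mem_zero_iff] at hc
    exact hc ▸ h0
  | @insert a s ha ih =>
    intro c hc
    rw [Finset.sum_insert ha, FractionalIdeal.mem_add] at hc
    obtain ⟨u, hu, v, hv, rfl⟩ := hc
    exact hadd _ _ (hmem a (Finset.mem_insert_self a s) u hu)
      (ih (fun i hi => hmem i (Finset.mem_insert_of_mem hi)) v hv)

lemma FI_mem_sum {ι : Type*} {s : Finset ι} (T : ι → FractionalIdeal S P)
    {i₀ : ι} (hi : i₀ ∈ s) {c : P} (hc : c ∈ T i₀) : c ∈ ∑ i ∈ s, T i := by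
  classical
  induction s using Finset.induction_on with
  | empty => simp at hi
  | @insert a s ha ih =>
    rw [Finset.sum_insert ha, FractionalIdeal.mem_add]
    rcases Finset.mem_insert.mp hi with rfl | h
    · exact ⟨c, hc, 0, FI_zero_mem _, add_zero c⟩
    · exact ⟨0, FI_zero_mem _, c, ih h, zero_add c⟩

lemma FI_mem_mul_spanSingleton [IsLocalization S P] {I : FractionalIdeal S P} {x y : P} :
    y ∈ I * FractionalIdeal.spanSingleton S x ↔ ∃ y' ∈ I, y = y' * x := by
  rw [mul_comm, FractionalIdeal.mem_singleton_mul]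
  constructor
  · rintro ⟨y', hy', rfl⟩; exact ⟨y', hy', mul_comm x y'⟩
  · rintro ⟨y', hy', rfl⟩; exact ⟨y', hy', mul_comm y' x⟩

end Aux

/-- Let `G = {(gᵢ, 𝔤ᵢ)}` be nonzero pseudo-polynomials over a Dedekind
domain. A nonzero pseudo-polynomial `(f, 𝔣)` is minimal w.r.t. `G` (cannot be
reduced modulo `G`) iff its leading term module `𝔣[x]·LT(f)` is not contained in
the leading term ideal `Lt(G) = ∑ᵢ 𝔤ᵢ[x]·LT(gᵢ)`. -/
theorem stmt9 {R : Type*} [CommRing R] [IsDomain R] [IsDedekindDomain R] {n l : ℕ}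
    (m : MonomialOrder (Fin n))
    (f : MvPolynomial (Fin n) (FractionRing R))
    (𝔣 : FractionalIdeal (nonZeroDivisors R) (FractionRing R))
    (hf : f ≠ 0) (h𝔣 : 𝔣 ≠ 0)
    (hpf : ∀ c ∈ 𝔣, ∀ d, c * f.coeff d ∈
      (1 : FractionalIdeal (nonZeroDivisors R) (FractionRing R)))
    (g : Fin l → MvPolynomial (Fin n) (FractionRing R))
    (𝔤 : Fin l → FractionalIdeal (nonZeroDivisors R) (FractionRing R))
    (hg : ∀ i, g i ≠ 0) (h𝔤 : ∀ i, 𝔤 i ≠ 0)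
    (hpg : ∀ i, ∀ c ∈ 𝔤 i, ∀ d, c * (g i).coeff d ∈
      (1 : FractionalIdeal (nonZeroDivisors R) (FractionRing R))) :
    ¬ Reducible m g 𝔤 𝔣 f ↔
      ¬ ({x : MvPolynomial (Fin n) (FractionRing R) |
            ∃ h, (∀ d, h.coeff d ∈ 𝔣) ∧ x = h * monomial (mdeg m f) (plc m f)} ⊆
          (Submodule.span (MvPolynomial (Fin n) R)
            (⋃ i, {x : MvPolynomial (Fin n) (FractionRing R) |
              ∃ c ∈ 𝔤 i, x = C c * monomial (mdeg m (g i)) (plc m (g i))}) :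
            Set (MvPolynomial (Fin n) (FractionRing R)))) := by
  classical
  apply not_congr
  set K := FractionRing R with hK
  set e₀ : Fin n →₀ ℕ := mdeg m f with he₀
  set c₀ : K := plc m f with hc₀
  set Gens : Set (MvPolynomial (Fin n) K) :=
    ⋃ i, {x : MvPolynomial (Fin n) K |
      ∃ c ∈ 𝔤 i, x = C c * monomial (mdeg m (g i)) (plc m (g i))} with hGens
  set Sp : (Fin n →₀ ℕ) → FractionalIdeal (nonZeroDivisors R) K := fun e =>
    ∑ i ∈ Finset.univ.filter (fun i => ∃ γ, e = mdeg m (g i) + γ),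
      𝔤 i * FractionalIdeal.spanSingleton (nonZeroDivisors R) (plc m (g i)) with hSp
  show (𝔣 * FractionalIdeal.spanSingleton (nonZeroDivisors R) c₀ ≤ Sp e₀) ↔ _
  constructor
  · -- Reducible → leading term module inside span
    intro hle x hx
    obtain ⟨h, hcoef, rfl⟩ := hx
    rw [h.as_sum, Finset.sum_mul]
    apply Submodule.sum_mem
    intro d _
    rw [monomial_mul]
    have hmem : h.coeff d * c₀ ∈ Sp e₀ :=
      hle (FI_mem_mul_spanSingleton.mpr ⟨h.coeff d, hcoef d, rfl⟩)
    refine FI_sum_induction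
      (Q := fun c => (monomial (d + e₀) c : MvPolynomial (Fin n) K) ∈
        Submodule.span (MvPolynomial (Fin n) R) Gens) _ _ ?_ ?_ ?_ _ hmem
    · simp only [map_zero]; exact Submodule.zero_mem _
    · intro a b ha hb
      simp only [map_add]
      exact Submodule.add_mem _ ha hb
    · intro i hi c hc
      obtain ⟨γ, hγ⟩ := (Finset.mem_filter.mp hi).2
      obtain ⟨c', hc', rfl⟩ := FI_mem_mul_spanSingleton.mp hc
      show (monomial (d + e₀) (c' * plc m (g i)) : MvPolynomial (Fin n) K) ∈
        Submodule.span (MvPolynomial (Fin n) R) Gens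
      have key : (monomial (d + e₀) (c' * plc m (g i)) : MvPolynomial (Fin n) K) =
          (monomial (d + γ) (1 : R) : MvPolynomial (Fin n) R) •
            (C c' * monomial (mdeg m (g i)) (plc m (g i))) := by
        rw [Algebra.smul_def, MvPolynomial.algebraMap_def, map_monomial, map_one,
          C_mul_monomial, monomial_mul, one_mul, hγ]
        congr 1
        abel
      rw [key]
      exact Submodule.smul_mem _ _ (Submodule.subset_span
        (Set.mem_iUnion.mpr ⟨i, c', hc', rfl⟩))
  · -- span inclusion → Reducible
    intro hsub c hc
    obtain ⟨a, ha, rfl⟩ := FI_mem_mul_spanSingleton.mp hc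
    have hx : (C a * monomial e₀ c₀ : MvPolynomial (Fin n) K) ∈
        Submodule.span (MvPolynomial (Fin n) R) Gens := by
      apply hsub
      refine ⟨C a, ?_, rfl⟩
      intro d
      rw [coeff_C]
      split_ifs
      · exact ha
      · exact FI_zero_mem _
    have hmono : ∀ (r : R) (d d' : Fin n →₀ ℕ), ∀ c ∈ Sp d',
        algebraMap R K r * c ∈ Sp (d + d') := by
      intro r d d'
      refine FI_sum_induction _ _ ?_ ?_ ?_
      · rw [mul_zero]; exact FI_zero_mem _
      · intro a b hqa hqb; rw [mul_add]; exact FI_add_mem hqa hqb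
      · intro i hi c hc
        obtain ⟨γ, hγ⟩ := (Finset.mem_filter.mp hi).2
        refine FI_mem_sum _ ?_ (FI_smul_mem r hc)
        refine Finset.mem_filter.mpr ⟨Finset.mem_univ i, ⟨γ + d, ?_⟩⟩
        rw [hγ]
        abel
    -- the key claim: every element of the span has all coefficients in Sp
    have claim : ∀ x ∈ Submodule.span (MvPolynomial (Fin n) R) Gens,
        ∀ e, x.coeff e ∈ Sp e := by
      intro x hxs
      induction hxs using Submodule.span_induction with
      | mem x hxg =>
        obtain ⟨i, c', hc', rfl⟩ := Set.mem_iUnion.mp hxg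
        intro e
        rw [C_mul_monomial, coeff_monomial]
        split_ifs with hdeq
        · refine FI_mem_sum _ ?_ (FI_mem_mul_spanSingleton.mpr ⟨c', hc', rfl⟩)
          exact Finset.mem_filter.mpr ⟨Finset.mem_univ i, ⟨0, by rw [← hdeq, add_zero]⟩⟩
        · exact FI_zero_mem _
      | zero => intro e; rw [coeff_zero]; exact FI_zero_mem _
      | add x y _ _ ihx ihy =>
        intro e; rw [coeff_add]; exact FI_add_mem (ihx e) (ihy e)
      | smul p x _ ihx =>
        intro e
        have hps : p • x = MvPolynomial.map (algebraMap R K) p * x := by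
          rw [Algebra.smul_def, MvPolynomial.algebraMap_def]
        rw [hps, coeff_mul]
        refine FI_fsum_mem _ _ _ ?_
        intro q hq
        rw [coeff_map]
        rw [Finset.HasAntidiagonal.mem_antidiagonal] at hq
        exact hq ▸ hmono (p.coeff q.1) q.1 q.2 _ (ihx q.2)
    have hfin := claim _ hx e₀
    have hcoeff : (C a * monomial e₀ c₀ : MvPolynomial (Fin n) K).coeff e₀ = a * c₀ := by
      rw [C_mul_monomial, coeff_monomial, if_pos rfl]
    rwa [hcoeff] at hfin
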